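/- For any integer h (possibly negative), the formal power series (e^{hx} − 1)/(e^x − 1) is a Hurwitz series, i.e., its exponential generating function coefficients are integers. -/

import Mathlib

/-- A Hurwitz series: all exponential generating function coefficients are integers. -/
def IsHurwitz (f : PowerSeries ℚ) : Prop :=
  ∀ n : ℕ, ∃ m : ℤ, (Nat.factorial n : ℚ) * PowerSeries.coeff (R := ℚ) n f = m

open PowerSeries Finset in
lemma telescope_key (a : ℚ) (m : ℕ) :
    (∑ k ∈ Finset.range m, rescale (a + k) (exp ℚ)) * (exp ℚ - 1) =
      rescale (a + m) (exp ℚ) - rescale a (exp ℚ) := by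
  induction m with
  | zero => simp
  | succ n ih =>
    have hmul : rescale (a + n) (exp ℚ) * exp ℚ = rescale (a + (n + 1)) (exp ℚ) := by
      have := exp_mul_exp_eq_exp_add (A := ℚ) (a + n) 1
      rw [rescale_one] at this
      simp only [RingHom.id_apply] at this
      rw [this]; ring_nf
    rw [Finset.sum_range_succ, add_mul, ih, mul_sub, mul_one, hmul]
    push_cast
    ring_nf

open PowerSeries Finset in
lemma exp_sub_one_ne : exp ℚ - 1 ≠ 0 := by
  intro h0
  have := congrArg (coeff (R := ℚ) 1) h0
  simp [coeff_exp] at this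

open PowerSeries Finset in
lemma coeff_sum_rescale (a : ℚ) (m n : ℕ) :
    (Nat.factorial n : ℚ) * coeff (R := ℚ) n (∑ k ∈ Finset.range m, rescale (a + k) (exp ℚ)) =
      ∑ k ∈ Finset.range m, (a + k) ^ n := by
  rw [map_sum, Finset.mul_sum]
  refine Finset.sum_congr rfl fun k _ => ?_
  rw [coeff_rescale, coeff_exp]
  have : ((Nat.factorial n : ℚ)) ≠ 0 := by positivity
  rw [Algebra.algebraMap_self, RingHom.id_apply]
  field_simp

/-- For any integer `h`, the series `(e^{hx} - 1)/(e^x - 1)` is a Hurwitz series. -/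
theorem hurwitz_geom (h : ℤ) (f : PowerSeries ℚ)
    (hf : f * (PowerSeries.exp ℚ - 1) =
      PowerSeries.rescale (h : ℚ) (PowerSeries.exp ℚ) - 1) :
    IsHurwitz f := by
  classical
  rcases le_or_gt 0 h with hpos | hneg
  · obtain ⟨m, rfl⟩ := Int.eq_ofNat_of_zero_le hpos
    set g := ∑ k ∈ Finset.range m, PowerSeries.rescale ((0 : ℚ) + k) (PowerSeries.exp ℚ) with hg
    have hgmul : g * (PowerSeries.exp ℚ - 1)
        = PowerSeries.rescale ((m : ℤ) : ℚ) (PowerSeries.exp ℚ) - 1 := by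
      rw [hg, telescope_key]
      simp [PowerSeries.rescale_zero]
    have hfg : f = g := mul_right_cancel₀ exp_sub_one_ne (hf.trans hgmul.symm)
    intro n
    refine ⟨∑ k ∈ Finset.range m, (k : ℤ) ^ n, ?_⟩
    rw [hfg, hg, coeff_sum_rescale]
    push_cast
    ring_nf
  · have hm : h + ((-h).toNat : ℤ) = 0 := by
      rw [Int.toNat_of_nonneg (by omega)]; ring
    set m := (-h).toNat with hmdef
    set g := -(∑ k ∈ Finset.range m, PowerSeries.rescale ((h : ℚ) + k) (PowerSeries.exp ℚ))
      with hg
    have hgmul : g * (PowerSeries.exp ℚ - 1)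
        = PowerSeries.rescale ((h : ℤ) : ℚ) (PowerSeries.exp ℚ) - 1 := by
      rw [hg, neg_mul, telescope_key]
      have : ((h : ℚ) + m) = 0 := by
        exact_mod_cast congrArg (Int.cast : ℤ → ℚ) hm
      rw [this]
      simp [PowerSeries.rescale_zero]
    have hfg : f = g := mul_right_cancel₀ exp_sub_one_ne (hf.trans hgmul.symm)
    intro n
    refine ⟨-∑ k ∈ Finset.range m, (h + (k : ℤ)) ^ n, ?_⟩
    rw [hfg, hg, map_neg, mul_neg, coeff_sum_rescale]
    push_cast
    ring_nf
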